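/- Let G be a finite group acting unitarily on ℂ^m and let {U_1, ..., U_k} be a representative set for this action, with U_i of size m × m_i. Then a G-invariant matrix A ∈ (ℂ^{m×m})^G is positive semidefinite if and only if each of the matrices U_i^* A U_i (i = 1, ..., k) is positive semidefinite. -/

import Mathlib

open Matrix
open scoped ComplexOrder

/-- The standard inner product on `ℂ^m`. -/
noncomputable def ip {m : ℕ} (x y : Fin m → ℂ) : ℂ := ∑ i, star (x i) * y i

lemma ip_eq_dot {m : ℕ} (x y : Fin m → ℂ) : ip x y = star x ⬝ᵥ y := rfl

lemma ip_smul_right {m : ℕ} (x y : Fin m → ℂ) (c : ℂ) : ip x (c • y) = c * ip x y := by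
  simp [ip, Finset.mul_sum]
  exact Finset.sum_congr rfl fun i _ => by ring

lemma ip_zero_right {m : ℕ} (x : Fin m → ℂ) : ip x 0 = 0 := by simp [ip]

lemma ip_zero_left {m : ℕ} (y : Fin m → ℂ) : ip 0 y = 0 := by simp [ip]

lemma ip_sum_right {m : ℕ} {ι : Type*} (s : Finset ι) (x : Fin m → ℂ) (f : ι → Fin m → ℂ) :
    ip x (∑ t ∈ s, f t) = ∑ t ∈ s, ip x (f t) := by
  simp [ip, Finset.sum_apply, Finset.mul_sum]
  exact Finset.sum_comm

lemma ip_sum_left {m : ℕ} {ι : Type*} (s : Finset ι) (y : Fin m → ℂ) (f : ι → Fin m → ℂ) :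
    ip (∑ t ∈ s, f t) y = ∑ t ∈ s, ip (f t) y := by
  simp [ip, Finset.sum_apply, Finset.sum_mul]
  exact Finset.sum_comm

lemma ip_self_real {m : ℕ} (x : Fin m → ℂ) :
    ∃ r : ℝ, 0 ≤ r ∧ ip x x = (r : ℂ) ∧ (x ≠ 0 → 0 < r) := by
  refine ⟨∑ i, Complex.normSq (x i), Finset.sum_nonneg fun i _ => Complex.normSq_nonneg _, ?_, ?_⟩
  · simp [ip, Complex.ofReal_sum]
    refine Finset.sum_congr rfl fun i _ => ?_
    rw [mul_comm, Complex.mul_conj]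
  · intro hx
    obtain ⟨i, hi⟩ : ∃ i, x i ≠ 0 := by
      by_contra h
      push_neg at h
      exact hx (funext h)
    exact Finset.sum_pos' (fun i _ => Complex.normSq_nonneg _)
      ⟨i, Finset.mem_univ i, Complex.normSq_pos.mpr hi⟩

lemma ip_self_eq_zero' {m : ℕ} {x : Fin m → ℂ} (h : ip x x = 0) : x = 0 := by
  obtain ⟨r, _, hr, hpos⟩ := ip_self_real x
  by_contra hx
  have := hpos hx
  rw [h] at hr
  exact absurd (Complex.ofReal_eq_zero.mp hr.symm) (ne_of_gt this)

lemma ip_adjoint {m : ℕ} (M : Matrix (Fin m) (Fin m) ℂ) (x y : Fin m → ℂ) :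
    ip (M *ᵥ x) y = ip x (Mᴴ *ᵥ y) := by
  rw [ip_eq_dot, ip_eq_dot, star_mulVec, dotProduct_mulVec]

lemma quad_zero_matrix_zero {n : Type*} [Fintype n] [DecidableEq n]
    {B : Matrix n n ℂ} (h : ∀ x : n → ℂ, star x ⬝ᵥ (B *ᵥ x) = 0) : B = 0 := by
  have hT : ∀ x : EuclideanSpace ℂ n, @inner ℂ _ _ (Matrix.toEuclideanLin B x) x = 0 := by
    intro x
    have hx := h ((WithLp.equiv 2 (n → ℂ)) x)
    have : @inner ℂ _ _ (Matrix.toEuclideanLin B x) x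
        = star (star ((WithLp.equiv 2 (n → ℂ)) x) ⬝ᵥ (B *ᵥ (WithLp.equiv 2 (n → ℂ)) x)) := by
      rw [Matrix.toEuclideanLin_apply]
      simp [PiLp.inner_apply, dotProduct, Matrix.mulVec, RCLike.inner_apply, Finset.mul_sum,
        mul_comm]
    rw [this, hx, star_zero]
  have := (inner_map_self_eq_zero (Matrix.toEuclideanLin B)).mp hT
  exact (LinearEquiv.map_eq_zero_iff _).mp this

/-- Schur's lemma, concrete form. -/
lemma schur2 {G : Type*} [Group G] {m : ℕ} (ρ : G →* Matrix (Fin m) (Fin m) ℂ)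
    (p q : Submodule ℂ (Fin m → ℂ))
    (hp_ne : p ≠ ⊥)
    (hp_irr : ∀ W : Submodule ℂ (Fin m → ℂ), W ≤ p →
      (∀ g : G, ∀ v ∈ W, (ρ g).mulVec v ∈ W) → W = ⊥ ∨ W = p)
    (hpG : ∀ g : G, ∀ v ∈ p, (ρ g).mulVec v ∈ p)
    (φ ψ : (Fin m → ℂ) →ₗ[ℂ] (Fin m → ℂ))
    (hφeq : ∀ g : G, ∀ v ∈ p, φ ((ρ g).mulVec v) = (ρ g).mulVec (φ v))
    (hφmap : Submodule.map φ p = q)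
    (hφinj : ∀ v ∈ p, φ v = 0 → v = 0)
    (hψeq : ∀ g : G, ∀ v ∈ p, ψ ((ρ g).mulVec v) = (ρ g).mulVec (ψ v))
    (hψmap : ∀ v ∈ p, ψ v ∈ q) :
    ∃ c : ℂ, ∀ v ∈ p, ψ v = c • φ v := by
  classical
  have hφp : ∀ v ∈ p, φ v ∈ q := fun v hv => hφmap ▸ Submodule.mem_map_of_mem hv
  set φ' : p →ₗ[ℂ] q := φ.restrict hφp with hφ'
  have hbij : Function.Bijective φ' := by
    constructor
    · intro a b hab
      have : φ (a : Fin m → ℂ) = φ (b : Fin m → ℂ) := by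
        have := congrArg (Subtype.val) hab
        simpa [φ', LinearMap.restrict_apply] using this
      have h0 : φ ((a : Fin m → ℂ) - b) = 0 := by
        rw [map_sub, this, sub_self]
      have := hφinj _ (p.sub_mem a.2 b.2) h0
      exact Subtype.ext (sub_eq_zero.mp this)
    · rintro ⟨y, hy⟩
      rw [← hφmap] at hy
      obtain ⟨v, hv, hvy⟩ := hy
      exact ⟨⟨v, hv⟩, Subtype.ext (by simpa [φ', LinearMap.restrict_apply] using hvy)⟩
  set E := LinearEquiv.ofBijective φ' hbij with hE
  set ψ' : p →ₗ[ℂ] q := ψ.restrict hψmap with hψ'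
  set e : Module.End ℂ p := (E.symm : q →ₗ[ℂ] p).comp ψ' with he
  haveI : Nontrivial p := Submodule.nontrivial_iff_ne_bot.mpr hp_ne
  obtain ⟨μ, hμ⟩ := Module.End.exists_eigenvalue e
  obtain ⟨v, hv⟩ := hμ.exists_hasEigenvector
  have hvv : e v = μ • v := hv.apply_eq_smul
  have hv0 : v ≠ 0 := hv.2
  have hev : ψ (v : Fin m → ℂ) = μ • φ (v : Fin m → ℂ) := by
    have h1 : E (e v) = E (μ • v) := congrArg E hvv
    have h2 : (E (e v) : Fin m → ℂ) = ψ (v : Fin m → ℂ) := by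
      simp only [he, LinearMap.comp_apply, LinearEquiv.coe_coe, LinearEquiv.apply_symm_apply]
      simp [ψ', LinearMap.restrict_apply]
    have h3 : (E (μ • v) : Fin m → ℂ) = μ • φ (v : Fin m → ℂ) := by
      rw [_root_.map_smul]
      have : (E v : Fin m → ℂ) = φ (v : Fin m → ℂ) := by
        simp [hE, LinearEquiv.ofBijective_apply, φ', LinearMap.restrict_apply]
      simp [this]
    rw [← h2, h1, h3]
  set Wk : Submodule ℂ (Fin m → ℂ) := p ⊓ LinearMap.ker (ψ - μ • φ) with hWk
  have hWkG : ∀ g : G, ∀ w ∈ Wk, (ρ g).mulVec w ∈ Wk := by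
    intro g w hw
    rw [hWk, Submodule.mem_inf] at hw ⊢
    obtain ⟨hwp, hwk⟩ := hw
    refine ⟨hpG g w hwp, ?_⟩
    rw [LinearMap.mem_ker, LinearMap.sub_apply, LinearMap.smul_apply] at hwk ⊢
    have hk : ψ w = μ • φ w := sub_eq_zero.mp hwk
    rw [hψeq g w hwp, hφeq g w hwp, hk, Matrix.mulVec_smul, sub_self]
  have hWkle : Wk ≤ p := inf_le_left
  rcases hp_irr Wk hWkle hWkG with h | h
  · exfalso
    have hvW : (v : Fin m → ℂ) ∈ Wk := by
      rw [hWk, Submodule.mem_inf]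
      refine ⟨v.2, ?_⟩
      rw [LinearMap.mem_ker, LinearMap.sub_apply, LinearMap.smul_apply, hev, sub_self]
    rw [h, Submodule.mem_bot] at hvW
    exact hv0 (Subtype.ext hvW)
  · refine ⟨μ, fun w hw => ?_⟩
    have hwW : w ∈ Wk := h ▸ hw
    rw [hWk, Submodule.mem_inf, LinearMap.mem_ker, LinearMap.sub_apply,
      LinearMap.smul_apply] at hwW
    exact sub_eq_zero.mp hwW.2

section decomp

variable {m : ℕ} {ι : Type*} [Fintype ι] [DecidableEq ι] (W : ι → Submodule ℂ (Fin m → ℂ))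

omit [DecidableEq ι] in
lemma decomp_unique_zero
    (horth : ∀ s t, s ≠ t → ∀ v ∈ W s, ∀ w ∈ W t, ip v w = 0)
    (f : ι → Fin m → ℂ) (hf : ∀ s, f s ∈ W s) (hsum : ∑ s, f s = 0) : ∀ s, f s = 0 := by
  intro s
  have h1 : ip (f s) (∑ t, f t) = 0 := by rw [hsum]; simp [ip]
  rw [ip_sum_right] at h1
  have h2 : ∀ t ∈ Finset.univ, t ≠ s → ip (f s) (f t) = 0 := fun t _ hts =>
    horth s t (Ne.symm hts) _ (hf s) _ (hf t)
  rw [Finset.sum_eq_single_of_mem s (Finset.mem_univ s) h2] at h1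
  exact ip_self_eq_zero' h1

lemma decomp_exists (hspan : (⨆ s, W s) = ⊤) (z : Fin m → ℂ) :
    ∃ f : ι → Fin m → ℂ, (∀ s, f s ∈ W s) ∧ ∑ s, f s = z := by
  classical
  let p : Submodule ℂ (Fin m → ℂ) :=
    { carrier := {z | ∃ f : ι → Fin m → ℂ, (∀ s, f s ∈ W s) ∧ ∑ s, f s = z}
      add_mem' := by
        rintro a b ⟨f, hf, rfl⟩ ⟨g, hg, rfl⟩
        exact ⟨f + g, fun s => (W s).add_mem (hf s) (hg s), by simp [Finset.sum_add_distrib]⟩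
      zero_mem' := ⟨0, fun s => (W s).zero_mem, by simp⟩
      smul_mem' := by
        rintro c a ⟨f, hf, rfl⟩
        exact ⟨c • f, fun s => (W s).smul_mem c (hf s), by simp [Finset.smul_sum]⟩ }
  have hle : ∀ s, W s ≤ p := by
    intro s v hv
    refine ⟨fun t => if t = s then v else 0, fun t => ?_, by simp⟩
    by_cases h : t = s
    · subst h; simpa using hv
    · simp [h]
  have : (⊤ : Submodule ℂ (Fin m → ℂ)) ≤ p := hspan ▸ iSup_le hle
  exact this (Submodule.mem_top)

end decomp

theorem stmt_11 {G : Type*} [Group G] [Fintype G] {m : ℕ}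
    -- a unitary representation of `G` on `ℂ^m`
    (ρ : G →* Matrix (Fin m) (Fin m) ℂ)
    (hunitary : ∀ g : G, ρ g ∈ Matrix.unitaryGroup (Fin m) ℂ)
    -- the isotypical decomposition: `V i` is the direct sum of the `m_i = mdims i`
    -- irreducible mutually isomorphic pairwise orthogonal modules `V i j`
    (k : ℕ) (mdims : Fin k → ℕ)
    (V : (i : Fin k) → Fin (mdims i) → Submodule ℂ (Fin m → ℂ))
    -- each `V i j` is `G`-invariant
    (hGinv : ∀ (g : G) (i : Fin k) (j : Fin (mdims i)), ∀ v ∈ V i j, (ρ g).mulVec v ∈ V i j)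
    -- the `V i j` together span `ℂ^m`
    (hspan : (⨆ (i : Fin k), ⨆ (j : Fin (mdims i)), V i j) = ⊤)
    -- the `V i j` are pairwise orthogonal
    (horth : ∀ (i i' : Fin k) (j : Fin (mdims i)) (j' : Fin (mdims i')),
      (⟨i, j⟩ : Σ i : Fin k, Fin (mdims i)) ≠ ⟨i', j'⟩ →
      ∀ v ∈ V i j, ∀ w ∈ V i' j', ip v w = 0)
    -- each `V i j` is a nonzero irreducible `G`-module
    (hirred : ∀ (i : Fin k) (j : Fin (mdims i)), V i j ≠ ⊥ ∧
      ∀ W : Submodule ℂ (Fin m → ℂ), W ≤ V i j →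
        (∀ g : G, ∀ v ∈ W, (ρ g).mulVec v ∈ W) → W = ⊥ ∨ W = V i j)
    -- representative vectors `u i j ∈ V i j`, nonzero
    (u : (i : Fin k) → Fin (mdims i) → (Fin m → ℂ))
    (hu : ∀ (i : Fin k) (j : Fin (mdims i)), u i j ∈ V i j ∧ u i j ≠ 0)
    -- for each `i` and all `j, j'` there is a `G`-isomorphism `V i j → V i j'`
    -- mapping `u i j` to `u i j'`
    (hiso : ∀ (i : Fin k) (j j' : Fin (mdims i)),
      ∃ φ : (Fin m → ℂ) →ₗ[ℂ] (Fin m → ℂ),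
        (∀ g : G, ∀ v ∈ V i j, φ ((ρ g).mulVec v) = (ρ g).mulVec (φ v)) ∧
        Submodule.map φ (V i j) = V i j' ∧
        (∀ v ∈ V i j, φ v = 0 → v = 0) ∧
        φ (u i j) = u i j')
    -- `V i j` and `V i' j'` are non-isomorphic for `i ≠ i'`: every `G`-equivariant
    -- map between them vanishes
    (hnoniso : ∀ (i i' : Fin k), i ≠ i' → ∀ (j : Fin (mdims i)) (j' : Fin (mdims i'))
      (φ : (Fin m → ℂ) →ₗ[ℂ] (Fin m → ℂ)),
        (∀ g : G, ∀ v ∈ V i j, φ ((ρ g).mulVec v) = (ρ g).mulVec (φ v)) →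
        (∀ v ∈ V i j, φ v ∈ V i' j') → ∀ v ∈ V i j, φ v = 0)
    -- a `G`-invariant matrix `A`
    (A : Matrix (Fin m) (Fin m) ℂ)
    (hA : ∀ g : G, ρ g * A = A * ρ g) :
    -- `A` is positive semidefinite iff each block `U_i^* A U_i` is,
    -- where `U_i` has columns `u i j`
    A.PosSemidef ↔ ∀ i : Fin k,
      (((Matrix.of fun (a : Fin m) (j : Fin (mdims i)) => u i j a)ᴴ * A *
        Matrix.of fun (a : Fin m) (j : Fin (mdims i)) => u i j a)).PosSemidef := by
  classical
  constructor
  · intro hA' i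
    exact hA'.conjTranspose_mul_mul_same _
  intro hM
  -- notation
  set S := (Σ i : Fin k, Fin (mdims i)) with hS
  let W : S → Submodule ℂ (Fin m → ℂ) := fun s => V s.1 s.2
  have horthS : ∀ s t : S, s ≠ t → ∀ v ∈ W s, ∀ w ∈ W t, ip v w = 0 := by
    rintro ⟨i, j⟩ ⟨i', j'⟩ hst
    exact horth i i' j j' hst
  have hspanS : (⨆ s : S, W s) = ⊤ := by
    rw [iSup_sigma]; exact hspan
  choose π hπmem hπsum using decomp_exists W hspanS
  -- uniqueness of the decomposition
  have huniq : ∀ (z : Fin m → ℂ) (f : S → Fin m → ℂ),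
      (∀ s, f s ∈ W s) → ∑ s, f s = z → ∀ s, f s = π z s := by
    intro z f hf hsum s
    have h0 : ∀ s, (f - fun t => π z t) s = 0 := by
      refine decomp_unique_zero W horthS _
        (fun t => (W t).sub_mem (hf t) (hπmem z t)) ?_
      simp only [Pi.sub_apply, Finset.sum_sub_distrib, hsum, hπsum, sub_self]
    have := h0 s
    simpa [sub_eq_zero] using this
  have hπ_single : ∀ (s : S) (v : Fin m → ℂ), v ∈ W s →
      π v s = v ∧ ∀ t, t ≠ s → π v t = 0 := by
    intro s v hv
    have hdec : ∀ t, (fun t => if t = s then v else 0) t ∈ W t := by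
      intro t
      by_cases h : t = s
      · subst h; simpa using hv
      · simp [h]
    have hsum : ∑ t, (fun t => if t = s then v else 0) t = v := by
      rw [Finset.sum_eq_single s (fun t _ ht => if_neg ht) (fun h => absurd (Finset.mem_univ s) h)]; exact if_pos rfl
    have := huniq v _ hdec hsum
    constructor
    · have := this s; simpa using this.symm
    · intro t ht; have := this t; simpa [ht] using this.symm
  have hπ_add : ∀ (z z' : Fin m → ℂ) (s : S), π (z + z') s = π z s + π z' s := by
    intro z z' s
    refine (huniq (z + z') (fun t => π z t + π z' t)
      (fun t => (W t).add_mem (hπmem z t) (hπmem z' t)) ?_ s).symm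
    rw [Finset.sum_add_distrib, hπsum, hπsum]
  have hπ_smul : ∀ (c : ℂ) (z : Fin m → ℂ) (s : S), π (c • z) s = c • π z s := by
    intro c z s
    refine (huniq (c • z) (fun t => c • π z t)
      (fun t => (W t).smul_mem c (hπmem z t)) ?_ s).symm
    rw [← Finset.smul_sum, hπsum]
  have hπ_equiv : ∀ (g : G) (z : Fin m → ℂ) (s : S), π ((ρ g) *ᵥ z) s = (ρ g) *ᵥ π z s := by
    intro g z s
    refine (huniq ((ρ g) *ᵥ z) (fun t => (ρ g) *ᵥ π z t)
      (fun t => hGinv g t.1 t.2 _ (hπmem z t)) ?_ s).symm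
    have := map_sum (Matrix.mulVecLin (ρ g)) (fun t => π z t) Finset.univ
    simp only [Matrix.mulVecLin_apply] at this
    rw [← this, hπsum]
  have hπ_ip : ∀ (s : S) (w : Fin m → ℂ), w ∈ W s → ∀ z, ip w z = ip w (π z s) := by
    intro s w hw z
    conv_lhs => rw [← hπsum z]
    rw [ip_sum_right]
    refine Finset.sum_eq_single_of_mem s (Finset.mem_univ s) ?_
    intro t _ hts
    exact horthS s t (Ne.symm hts) _ hw _ (hπmem z t)
  -- projections as linear maps
  let πL : S → (Fin m → ℂ) →ₗ[ℂ] (Fin m → ℂ) := fun s =>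
    { toFun := fun z => π z s
      map_add' := fun z z' => hπ_add z z' s
      map_smul' := fun c z => hπ_smul c z s }
  -- basic facts about the representation
  have hstar : ∀ g : G, (ρ g)ᴴ = ρ g⁻¹ := by
    intro g
    have h1 : ρ g * star (ρ g) = 1 := (Matrix.mem_unitaryGroup_iff).mp (hunitary g)
    have h2 : ρ g⁻¹ * ρ g = 1 := by rw [← _root_.map_mul ρ, inv_mul_cancel]; exact _root_.map_one ρ
    calc (ρ g)ᴴ = star (ρ g) := rfl
    _ = 1 * star (ρ g) := (one_mul _).symm
    _ = (ρ g⁻¹ * ρ g) * star (ρ g) := by rw [h2]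
    _ = ρ g⁻¹ * (ρ g * star (ρ g)) := by rw [mul_assoc]
    _ = ρ g⁻¹ := by rw [h1, mul_one]
  have hAv : ∀ (g : G) (x : Fin m → ℂ), (ρ g) *ᵥ (A *ᵥ x) = A *ᵥ ((ρ g) *ᵥ x) := by
    intro g x
    rw [Matrix.mulVec_mulVec, Matrix.mulVec_mulVec, hA g]
  -- cross-isotypic vanishing
  have hcross : ∀ s t : S, s.1 ≠ t.1 → ∀ v ∈ W t, π (A *ᵥ v) s = 0 := by
    intro s t hst v hv
    have hψeq : ∀ g : G, ∀ w ∈ V t.1 t.2,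
        ((πL s).comp (Matrix.mulVecLin A)) ((ρ g) *ᵥ w)
          = (ρ g) *ᵥ (((πL s).comp (Matrix.mulVecLin A)) w) := by
      intro g w _
      show π (A *ᵥ ((ρ g) *ᵥ w)) s = (ρ g) *ᵥ π (A *ᵥ w) s
      rw [← hAv, hπ_equiv]
    have hψmap : ∀ w ∈ V t.1 t.2, ((πL s).comp (Matrix.mulVecLin A)) w ∈ V s.1 s.2 :=
      fun w _ => hπmem (A *ᵥ w) s
    exact hnoniso t.1 s.1 (fun h => hst h.symm) t.2 s.2 _ hψeq hψmap v hv
  -- the key quadratic-form bound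
  have hq : ∀ x : Fin m → ℂ, 0 ≤ ip x (A *ᵥ x) := by
    intro x
    have hAx : A *ᵥ x = ∑ t, A *ᵥ π x t := by
      conv_lhs => rw [← hπsum x]
      have := map_sum (Matrix.mulVecLin A) (fun t => π x t) Finset.univ
      simpa only [Matrix.mulVecLin_apply] using this
    have hx : ip x (A *ᵥ x) = ∑ s : S, ∑ t : S, ip (π x s) (A *ᵥ π x t) := by
      have e1 : ip (∑ s, π x s) (A *ᵥ x) = ∑ s, ip (π x s) (A *ᵥ x) :=
        ip_sum_left Finset.univ (A *ᵥ x) (fun s => π x s)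
      rw [hπsum x] at e1
      rw [e1]
      refine Finset.sum_congr rfl fun s _ => ?_
      rw [hAx, ip_sum_right]
    rw [hx]
    have hterm0 : ∀ s t : S, s.1 ≠ t.1 → ip (π x s) (A *ᵥ π x t) = 0 := by
      intro s t h
      rw [hπ_ip s _ (hπmem x s) (A *ᵥ π x t), hcross s t h _ (hπmem x t), ip_zero_right]
    -- regroup as a sum over i
    have hsig : ∀ F : S → ℂ, ∑ s : S, F s = ∑ i : Fin k, ∑ j : Fin (mdims i), F ⟨i, j⟩ :=
      fun F => Finset.sum_sigma Finset.univ (fun _ => Finset.univ) F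
    have hregroup : ∑ s : S, ∑ t : S, ip (π x s) (A *ᵥ π x t)
        = ∑ i : Fin k, ∑ j : Fin (mdims i), ∑ j' : Fin (mdims i),
            ip (π x ⟨i, j⟩) (A *ᵥ π x ⟨i, j'⟩) := by
      rw [hsig (fun s => ∑ t : S, ip (π x s) (A *ᵥ π x t))]
      refine Finset.sum_congr rfl fun i _ => ?_
      refine Finset.sum_congr rfl fun j _ => ?_
      rw [hsig (fun t => ip (π x ⟨i, j⟩) (A *ᵥ π x t))]
      refine Finset.sum_eq_single_of_mem i (Finset.mem_univ i) ?_
      intro i' _ hii'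
      refine Finset.sum_eq_zero fun j' _ => ?_
      exact hterm0 ⟨i, j⟩ ⟨i', j'⟩ (fun h => hii' h.symm)
    rw [hregroup]
    refine Finset.sum_nonneg fun i _ => ?_
    -- per-isotypic-component analysis
    rcases Nat.eq_zero_or_pos (mdims i) with h0 | hpos
    · haveI : IsEmpty (Fin (mdims i)) := by rw [h0]; exact Fin.isEmpty
      simp
    set j0 : Fin (mdims i) := ⟨0, hpos⟩ with hj0
    obtain ⟨r, hr0, hrip, hrpos⟩ := ip_self_real (u i j0)
    have hrpos' : 0 < r := hrpos (hu i j0).2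
    -- chosen isomorphisms from `V i j0` to `V i j`
    choose φf hφeq hφmap hφinj hφu using hiso i j0
    -- Schur: blocks of A
    have hblock : ∀ j j' : Fin (mdims i), ∃ B : ℂ, ∀ v ∈ V i j0,
        π (A *ᵥ (φf j' v)) ⟨i, j⟩ = B • φf j v := by
      intro j j'
      have hψeq : ∀ g : G, ∀ v ∈ V i j0,
          ((πL ⟨i, j⟩).comp ((Matrix.mulVecLin A).comp (φf j'))) ((ρ g) *ᵥ v)
            = (ρ g) *ᵥ (((πL ⟨i, j⟩).comp ((Matrix.mulVecLin A).comp (φf j'))) v) := by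
        intro g v hv
        show π (A *ᵥ φf j' ((ρ g) *ᵥ v)) ⟨i, j⟩ = (ρ g) *ᵥ π (A *ᵥ φf j' v) ⟨i, j⟩
        rw [hφeq j' g v hv, ← hAv, hπ_equiv]
      have hψmap : ∀ v ∈ V i j0,
          ((πL ⟨i, j⟩).comp ((Matrix.mulVecLin A).comp (φf j'))) v ∈ V i j :=
        fun v _ => hπmem _ ⟨i, j⟩
      obtain ⟨c, hc⟩ := schur2 ρ (V i j0) (V i j) (hirred i j0).1 (hirred i j0).2
        (fun g v hv => hGinv g i j0 v hv) (φf j) _ (hφeq j) (hφmap j) (hφinj j) hψeq hψmap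
      exact ⟨c, fun v hv => hc v hv⟩
    choose B hB using hblock
    -- Schur: the isomorphisms scale the inner product
    have hc : ∀ j : Fin (mdims i), ∃ c : ℂ, ∀ v w : Fin m → ℂ, v ∈ V i j0 → w ∈ V i j0 →
        ip (φf j v) (φf j w) = c * ip v w := by
      intro j
      set φt : (Fin m → ℂ) →ₗ[ℂ] (Fin m → ℂ) := (φf j).comp (πL ⟨i, j0⟩) with hφt
      set P := LinearMap.toMatrix' φt with hP
      have hPapp : ∀ z, P *ᵥ z = φt z := by
        intro z
        rw [← Matrix.toLin'_apply, hP, Matrix.toLin'_toMatrix']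
      have hφt_equiv : ∀ (g : G) (z : Fin m → ℂ), φt ((ρ g) *ᵥ z) = (ρ g) *ᵥ φt z := by
        intro g z
        simp only [hφt, LinearMap.comp_apply]
        show φf j (π ((ρ g) *ᵥ z) ⟨i, j0⟩) = (ρ g) *ᵥ φf j (π z ⟨i, j0⟩)
        rw [hπ_equiv, hφeq j g _ (hπmem z ⟨i, j0⟩)]
      have hPcomm : ∀ g : G, P * ρ g = ρ g * P := by
        intro g
        apply Matrix.toLin'.injective
        apply LinearMap.ext
        intro z
        rw [Matrix.toLin'_apply, Matrix.toLin'_apply, ← Matrix.mulVec_mulVec,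
          ← Matrix.mulVec_mulVec, hPapp, hφt_equiv, hPapp]
      have hPHcomm : ∀ g : G, Pᴴ * ρ g = ρ g * Pᴴ := by
        intro g
        have h1 := hPcomm g⁻¹
        have h2 := congrArg Matrix.conjTranspose h1
        rw [Matrix.conjTranspose_mul, Matrix.conjTranspose_mul, hstar g⁻¹, inv_inv] at h2
        exact h2.symm
      have hQcomm : ∀ g : G, (Pᴴ * P) * ρ g = ρ g * (Pᴴ * P) := by
        intro g
        rw [mul_assoc, hPcomm g, ← mul_assoc, hPHcomm g, mul_assoc]
      have hQmap : ∀ v ∈ V i j0, (Matrix.mulVecLin (Pᴴ * P)) v ∈ V i j0 := by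
        intro v hv
        show (Pᴴ * P) *ᵥ v ∈ V i j0
        have hzt : ∀ t : S, t ≠ ⟨i, j0⟩ → π ((Pᴴ * P) *ᵥ v) t = 0 := by
          intro t ht
          apply ip_self_eq_zero'
          have h1 : ip (π ((Pᴴ * P) *ᵥ v) t) ((Pᴴ * P) *ᵥ v)
              = ip (π ((Pᴴ * P) *ᵥ v) t) (π ((Pᴴ * P) *ᵥ v) t) :=
            hπ_ip t _ (hπmem _ t) _
          have e := ip_adjoint P (π ((Pᴴ * P) *ᵥ v) t) (P *ᵥ v)
          rw [Matrix.mulVec_mulVec] at e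
          have hPz : P *ᵥ π ((Pᴴ * P) *ᵥ v) t = 0 := by
            rw [hPapp]
            show φf j (π (π ((Pᴴ * P) *ᵥ v) t) ⟨i, j0⟩) = 0
            rw [(hπ_single t _ (hπmem _ t)).2 ⟨i, j0⟩ (fun h => ht h.symm), map_zero]
          rw [hPz, ip_zero_left] at e
          rw [← h1, ← e]
        have hzeq : (Pᴴ * P) *ᵥ v = π ((Pᴴ * P) *ᵥ v) ⟨i, j0⟩ := by
          conv_lhs => rw [← hπsum ((Pᴴ * P) *ᵥ v)]
          exact Finset.sum_eq_single_of_mem _ (Finset.mem_univ _) (fun t _ hts => hzt t hts)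
        rw [hzeq]
        exact hπmem ((Pᴴ * P) *ᵥ v) ⟨i, j0⟩
      have hQeq : ∀ g : G, ∀ v ∈ V i j0,
          (Matrix.mulVecLin (Pᴴ * P)) ((ρ g) *ᵥ v) = (ρ g) *ᵥ ((Matrix.mulVecLin (Pᴴ * P)) v) := by
        intro g v _
        simp only [Matrix.mulVecLin_apply]
        rw [Matrix.mulVec_mulVec, Matrix.mulVec_mulVec, hQcomm g]
      obtain ⟨c, hc⟩ := schur2 ρ (V i j0) (V i j0) (hirred i j0).1 (hirred i j0).2
        (fun g v hv => hGinv g i j0 v hv) LinearMap.id _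
        (fun g v _ => rfl) (Submodule.map_id _) (fun v _ h => h) hQeq hQmap
      refine ⟨c, fun v w hv hw => ?_⟩
      have hv' : φf j v = P *ᵥ v := by
        rw [hPapp]
        show φf j v = φf j (π v ⟨i, j0⟩)
        rw [(hπ_single ⟨i, j0⟩ v hv).1]
      have hw' : φf j w = P *ᵥ w := by
        rw [hPapp]
        show φf j w = φf j (π w ⟨i, j0⟩)
        rw [(hπ_single ⟨i, j0⟩ w hw).1]
      rw [hv', hw', ip_adjoint, Matrix.mulVec_mulVec]
      have := hc w hw
      simp only [Matrix.mulVecLin_apply, LinearMap.id_apply] at this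
      rw [this, ip_smul_right]
    choose c hcspec using hc
    -- preimages of the components of x
    have hwex : ∀ j : Fin (mdims i), ∃ w, w ∈ V i j0 ∧ φf j w = π x ⟨i, j⟩ := by
      intro j
      have hmem : π x ⟨i, j⟩ ∈ V i j := hπmem x ⟨i, j⟩
      rw [← hφmap j] at hmem
      obtain ⟨w, hw, hweq⟩ := hmem
      exact ⟨w, hw, hweq⟩
    choose w hwmem hwphi using hwex
    -- the block matrix from the statement
    set M := ((Matrix.of fun (a : Fin m) (j : Fin (mdims i)) => u i j a)ᴴ * A *
        Matrix.of fun (a : Fin m) (j : Fin (mdims i)) => u i j a) with hMdef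
    have hMip : ∀ j j' : Fin (mdims i), M j j' = ip (u i j) (A *ᵥ u i j') := by
      intro j j'
      simp only [hMdef, Matrix.mul_apply, Matrix.conjTranspose_apply, Matrix.of_apply, ip,
        Matrix.mulVec, dotProduct, Finset.sum_mul, Finset.mul_sum]
      rw [Finset.sum_comm]
      refine Finset.sum_congr rfl fun a _ => Finset.sum_congr rfl fun b _ => by ring
    have hMentry : ∀ j j' : Fin (mdims i), M j j' = B j j' * (c j * (r : ℂ)) := by
      intro j j'
      rw [hMip j j']
      have h1 : ip (u i j) (A *ᵥ u i j') = ip (u i j) (π (A *ᵥ u i j') ⟨i, j⟩) :=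
        hπ_ip ⟨i, j⟩ _ (hu i j).1 _
      have h2 : A *ᵥ u i j' = A *ᵥ φf j' (u i j0) := by rw [hφu j']
      have h3 : π (A *ᵥ φf j' (u i j0)) ⟨i, j⟩ = B j j' • φf j (u i j0) :=
        hB j j' (u i j0) (hu i j0).1
      rw [h1, h2, h3, ip_smul_right, hφu j]
      have h4 : ip (u i j) (u i j) = c j * (r : ℂ) := by
        rw [← hφu j, hcspec j _ _ (hu i j0).1 (hu i j0).1, hrip]
      rw [h4]
    -- the term formula
    have htermf : ∀ j j' : Fin (mdims i),
        ip (π x ⟨i, j⟩) (A *ᵥ π x ⟨i, j'⟩) = B j j' * (c j * ip (w j) (w j')) := by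
      intro j j'
      have h1 : ip (π x ⟨i, j⟩) (A *ᵥ π x ⟨i, j'⟩)
          = ip (π x ⟨i, j⟩) (π (A *ᵥ π x ⟨i, j'⟩) ⟨i, j⟩) :=
        hπ_ip ⟨i, j⟩ _ (hπmem x ⟨i, j⟩) _
      rw [h1, ← hwphi j', ← hwphi j, hB j j' (w j') (hwmem j'), ip_smul_right,
        hcspec j _ _ (hwmem j) (hwmem j')]
    -- Gram positivity
    have hR : 0 ≤ ∑ j : Fin (mdims i), ∑ j' : Fin (mdims i), M j j' * ip (w j) (w j') := by
      have e1 : ∀ j j' : Fin (mdims i), M j j' * ip (w j) (w j')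
          = ∑ a : Fin m, star (w j a) * (M j j' * w j' a) := by
        intro j j'
        simp only [ip, Finset.mul_sum]
        exact Finset.sum_congr rfl fun a _ => by ring
      have hrw : (∑ j : Fin (mdims i), ∑ j' : Fin (mdims i), M j j' * ip (w j) (w j'))
          = ∑ a : Fin m, star (fun j => w j a) ⬝ᵥ (M *ᵥ fun j => w j a) := by
        calc (∑ j : Fin (mdims i), ∑ j' : Fin (mdims i), M j j' * ip (w j) (w j'))
            = ∑ j : Fin (mdims i), ∑ j' : Fin (mdims i), ∑ a : Fin m,
                star (w j a) * (M j j' * w j' a) :=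
              Finset.sum_congr rfl fun j _ => Finset.sum_congr rfl fun j' _ => e1 j j'
          _ = ∑ j : Fin (mdims i), ∑ a : Fin m, ∑ j' : Fin (mdims i),
                star (w j a) * (M j j' * w j' a) :=
              Finset.sum_congr rfl fun j _ => Finset.sum_comm
          _ = ∑ a : Fin m, ∑ j : Fin (mdims i), ∑ j' : Fin (mdims i),
                star (w j a) * (M j j' * w j' a) := Finset.sum_comm
          _ = ∑ a : Fin m, star (fun j => w j a) ⬝ᵥ (M *ᵥ fun j => w j a) := by
              refine Finset.sum_congr rfl fun a _ => ?_
              simp only [dotProduct, Matrix.mulVec, Pi.star_apply, Finset.mul_sum]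
      rw [hrw]
      exact Finset.sum_nonneg fun a _ => (hM i).dotProduct_mulVec_nonneg _
    -- conclusion for this `i`
    have hkey : (r : ℂ) * (∑ j : Fin (mdims i), ∑ j' : Fin (mdims i),
        ip (π x ⟨i, j⟩) (A *ᵥ π x ⟨i, j'⟩))
        = ∑ j : Fin (mdims i), ∑ j' : Fin (mdims i), M j j' * ip (w j) (w j') := by
      rw [Finset.mul_sum]
      refine Finset.sum_congr rfl fun j _ => ?_
      rw [Finset.mul_sum]
      refine Finset.sum_congr rfl fun j' _ => ?_
      rw [htermf j j', hMentry j j']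
      ring
    have hrne : (r : ℂ) ≠ 0 := Complex.ofReal_ne_zero.mpr (ne_of_gt hrpos')
    have hfin : (∑ j : Fin (mdims i), ∑ j' : Fin (mdims i),
        ip (π x ⟨i, j⟩) (A *ᵥ π x ⟨i, j'⟩))
        = (r : ℂ)⁻¹ * ∑ j : Fin (mdims i), ∑ j' : Fin (mdims i), M j j' * ip (w j) (w j') := by
      rw [← hkey, ← mul_assoc, inv_mul_cancel₀ hrne, one_mul]
    rw [hfin]
    refine mul_nonneg ?_ hR
    rw [← Complex.ofReal_inv]
    exact Complex.zero_le_real.mpr (le_of_lt (inv_pos.mpr hrpos'))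
  -- from the quadratic bound to positive semidefiniteness
  have hq' : ∀ x : Fin m → ℂ, 0 ≤ star x ⬝ᵥ (A *ᵥ x) := by
    intro x
    rw [← ip_eq_dot]
    exact hq x
  refine Matrix.PosSemidef.of_dotProduct_mulVec_nonneg ?_ ?_
  · -- Hermitian
    have him : ∀ x : Fin m → ℂ, star x ⬝ᵥ ((A - Aᴴ) *ᵥ x) = 0 := by
      intro x
      have h1 := hq' x
      have himz : (star x ⬝ᵥ (A *ᵥ x)).im = 0 := by
        have := (Complex.le_def.mp h1).2
        simpa using this.symm
      have hconj : (starRingEnd ℂ) (star x ⬝ᵥ (A *ᵥ x)) = star x ⬝ᵥ (A *ᵥ x) :=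
        Complex.conj_eq_iff_im.mpr himz
      have hswap : star (star x ⬝ᵥ (A *ᵥ x)) = star x ⬝ᵥ (Aᴴ *ᵥ x) := by
        rw [star_dotProduct, star_star, star_mulVec, ← dotProduct_mulVec]
      rw [Matrix.sub_mulVec, dotProduct_sub]
      rw [← hswap, Complex.star_def, hconj, sub_self]
    have hsub : A - Aᴴ = 0 := quad_zero_matrix_zero him
    exact (sub_eq_zero.mp hsub).symm
  · exact hq'
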